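/- Along the Wasserstein geodesic γ(t) = exp_A(tX), the vector field J(t) = tY + t²(Γ_A[X]·A·Γ_A[Y] + Γ_A[Y]·A·Γ_A[X]) never vanishes for t > 0 in the domain of the geodesic, whenever Y ≠ 0: there is no p > 0 with γ(p) defined (i.e., I + pΓ_A[X] positive definite) and J(p) = 0. Consequently there are no conjugate points. -/

import Mathlib

open Matrix

lemma aux_zero {n : ℕ} {P T : Matrix (Fin n) (Fin n) ℝ}
    (hP : P.PosDef) (h : P * T + T * P = 0) : T = 0 := by
  have htr : trace (Tᵀ * (P * T)) + trace ((T * P) * Tᵀ) = 0 := by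
    rw [← trace_mul_comm Tᵀ (T * P), ← trace_add, ← Matrix.mul_add, h,
      Matrix.mul_zero, trace_zero]
  have hcol : ∀ j, (Tᵀ * (P * T)) j j = (fun i => T i j) ⬝ᵥ P *ᵥ (fun i => T i j) := by
    intro j
    simp only [Matrix.mul_apply, dotProduct, mulVec, transpose_apply]
  have hrow : ∀ i, ((T * P) * Tᵀ) i i = (fun j => T i j) ⬝ᵥ P *ᵥ (fun j => T i j) := by
    intro i
    simp only [Matrix.mul_apply, dotProduct, mulVec, transpose_apply, Finset.sum_mul]
    rw [Finset.sum_comm]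
    refine Finset.sum_congr rfl fun k _ => ?_
    rw [Finset.mul_sum]
    exact Finset.sum_congr rfl fun l _ => by ring
  have hq : ∀ v : Fin n → ℝ, 0 ≤ v ⬝ᵥ P *ᵥ v := fun v => by
    by_cases hv : v = 0
    · simp [hv]
    · have := hP.dotProduct_mulVec_pos hv
      simpa using this.le
  have hsum : (∑ j, (fun i => T i j) ⬝ᵥ P *ᵥ (fun i => T i j))
      + (∑ i, (fun j => T i j) ⬝ᵥ P *ᵥ (fun j => T i j)) = 0 := by
    simp only [Matrix.trace, Matrix.diag, hcol, hrow] at htr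
    exact htr
  have hcz : ∀ j, (fun i => T i j) ⬝ᵥ P *ᵥ (fun i => T i j) = 0 := by
    have h1 : (∑ j, (fun i => T i j) ⬝ᵥ P *ᵥ (fun i => T i j)) = 0 := by
      have := hq
      nlinarith [Finset.sum_nonneg (fun j (_ : j ∈ Finset.univ) => hq (fun i => T i j)),
        Finset.sum_nonneg (fun i (_ : i ∈ Finset.univ) => hq (fun j => T i j))]
    intro j
    have := (Finset.sum_eq_zero_iff_of_nonneg
      (fun j (_ : j ∈ Finset.univ) => hq (fun i => T i j))).mp h1 j (Finset.mem_univ j)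
    exact this
  ext i j
  by_contra hij
  have hvne : (fun i => T i j) ≠ 0 := by
    intro hv; exact hij (by simpa using congrFun hv i)
  have := hP.dotProduct_mulVec_pos hvne
  simp only [star_trivial] at this
  rw [hcz j] at this
  exact lt_irrefl 0 this

lemma posdef_conj {n : ℕ} {M N : Matrix (Fin n) (Fin n) ℝ}
    (hM : M.PosDef) (hNs : Nᵀ = N) (hNd : IsUnit N.det) : (N * M * N).PosDef := by
  refine Matrix.PosDef.of_dotProduct_mulVec_pos ?_ ?_
  · show (N * M * N)ᴴ = N * M * N
    simp only [conjTranspose_eq_transpose_of_trivial, Matrix.transpose_mul, hNs,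
      hM.1.eq.symm ▸ (conjTranspose_eq_transpose_of_trivial M ▸ rfl : Mᵀ = Mᵀ)]
    rw [show Mᵀ = M from (conjTranspose_eq_transpose_of_trivial M).symm.trans hM.1.eq]
    rw [Matrix.mul_assoc]
  · intro x hx
    have hNx : N *ᵥ x ≠ 0 := by
      intro h0
      apply hx
      have := congrArg (fun v => N⁻¹ *ᵥ v) h0
      simpa [Matrix.mulVec_mulVec, Matrix.nonsing_inv_mul N hNd] using this
    have := hM.dotProduct_mulVec_pos hNx
    simp only [star_trivial] at this ⊢
    calc x ⬝ᵥ (N * M * N) *ᵥ x = x ⬝ᵥ N *ᵥ (M *ᵥ (N *ᵥ x)) := by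
          rw [Matrix.mulVec_mulVec, Matrix.mulVec_mulVec]
      _ = (N *ᵥ x) ⬝ᵥ M *ᵥ (N *ᵥ x) := by
          rw [Matrix.dotProduct_mulVec x N, ← Matrix.mulVec_transpose, hNs]
      _ > 0 := this

open scoped MatrixOrder in
lemma exists_sqrt_aux {n : ℕ} {A : Matrix (Fin n) (Fin n) ℝ} (hA : A.PosDef) :
    ∃ N : Matrix (Fin n) (Fin n) ℝ, N * N = A ∧ Nᵀ = N := by
  refine ⟨CFC.sqrt A, CFC.sqrt_mul_sqrt_self A hA.posSemidef.nonneg, ?_⟩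
  exact (conjTranspose_eq_transpose_of_trivial _).symm.trans (CFC.sqrt_nonneg A).posSemidef.1.eq

/-- No conjugate points: along the Wasserstein geodesic `γ(t) = exp_A(tX)`, the Jacobi
field `J(t) = tY + t²(Γ_A[X]·A·Γ_A[Y] + Γ_A[Y]·A·Γ_A[X])` with `J(0) = 0` and
initial derivative `Y ≠ 0` never vanishes at a `p > 0` where the geodesic is defined. -/
theorem no_conjugate_points {n : ℕ} (A X Y GX GY : Matrix (Fin n) (Fin n) ℝ)
    (hA : A.PosDef) (hX : Xᵀ = X) (hY : Yᵀ = Y) (hY0 : Y ≠ 0)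
    (hGX : A * GX + GX * A = X) (hGXs : GXᵀ = GX)
    (hGY : A * GY + GY * A = Y) :
    ¬ ∃ p : ℝ, 0 < p ∧ (1 + p • GX).PosDef ∧
        p • Y + p ^ 2 • (GX * A * GY + GY * A * GX) = 0 := by
  rintro ⟨p, hp, hMpd, hJ⟩
  set M : Matrix (Fin n) (Fin n) ℝ := 1 + p • GX with hMdef
  have hYpK : Y + p • (GX * A * GY + GY * A * GX) = 0 := by
    have h0 : p • (Y + p • (GX * A * GY + GY * A * GX)) = 0 := by
      rw [smul_add, smul_smul, ← sq]; exact hJ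
    rcases smul_eq_zero.mp h0 with h | h
    · exact absurd h hp.ne'
    · exact h
  have heq : M * (A * GY) + GY * (A * M) = 0 := by
    have expand : M * (A * GY) + GY * (A * M)
        = (A * GY + GY * A) + p • (GX * A * GY + GY * A * GX) := by
      rw [hMdef]
      simp only [Matrix.add_mul, Matrix.mul_add, Matrix.one_mul, Matrix.mul_one,
        smul_mul_assoc, mul_smul_comm, smul_add, Matrix.mul_assoc]
      abel
    rw [expand, hGY]
    exact hYpK
  -- square root of A
  obtain ⟨N, hNN, hNs⟩ := exists_sqrt_aux hA
  have hNd : IsUnit N.det := by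
    have : N.det * N.det = A.det := by rw [← Matrix.det_mul, hNN]
    have hAd : A.det ≠ 0 := hA.det_pos.ne'
    exact isUnit_iff_ne_zero.mpr (fun h => hAd (by rw [← this, h, zero_mul]))
  have hMs : Mᵀ = M := by
    rw [hMdef, Matrix.transpose_add, Matrix.transpose_one, Matrix.transpose_smul, hGXs]
  have hP : (N * M * N).PosDef := posdef_conj hMpd hNs hNd
  have hPT : (N * M * N) * (N * GY * N) + (N * GY * N) * (N * M * N)
      = N * ((M * (A * GY) + GY * (A * M)) * N) := by
    simp only [Matrix.add_mul, Matrix.mul_add, Matrix.mul_assoc, ← hNN]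
  have hT0 : N * GY * N = 0 := by
    apply aux_zero hP
    rw [hPT, heq, Matrix.zero_mul, Matrix.mul_zero]
  have hGY0 : GY = 0 := by
    have h1 : GY * N = 0 := by
      have := congrArg (fun Z => N⁻¹ * Z) hT0
      simpa [Matrix.mul_assoc, ← Matrix.mul_assoc N⁻¹ N, Matrix.nonsing_inv_mul N hNd] using this
    have := congrArg (fun Z => Z * N⁻¹) h1
    simpa [Matrix.mul_assoc, Matrix.mul_nonsing_inv N hNd] using this
  apply hY0
  rw [← hGY, hGY0, Matrix.mul_zero, Matrix.zero_mul, add_zero]
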